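/- For every balanced dimension vector d of the generalized subspace quiver Γ, there exists a balanced representation M of Γ with dim M = d. Consequently every balanced dimension vector is θ-semistable. -/
import Mathlib


open Finset Module

/-- A representation of the generalized subspace quiver is balanced if for every cluster `i`
the combined map `Ψ(X,i)` is bijective. -/
def IsBalancedRep (K : Type*) [Field K] {m : ℕ} {r : Fin m → ℕ} (w : ∀ i, Fin (r i) → ℕ)
    {X0 : Type*} [AddCommGroup X0] [Module K X0]
    {X : ∀ i, Fin (r i) → Type*} [∀ i j, AddCommGroup (X i j)] [∀ i j, Module K (X i j)]
    (f : ∀ i j, Fin (w i j) → (X i j →ₗ[K] X0)) : Prop :=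
  ∀ i, Function.Bijective
    (fun g : (j : Fin (r i)) → Fin (w i j) → X i j => ∑ j, ∑ k, f i j k (g j k))

/-- For every balanced dimension vector `d` of the generalized subspace quiver there is a
balanced representation with dimension vector `d`; consequently (King's definition) every
balanced dimension vector is `θ`-semistable: the representation obtained satisfies
`θ(dim) = 0` and `θ(dim Y) ≤ 0` for all subrepresentations `Y`. -/
theorem balanced_dim_vector_realized (K : Type*) [Field K]
    (m : ℕ) (r : Fin m → ℕ) (w : ∀ i, Fin (r i) → ℕ)
    (d0 : ℕ) (d : ∀ i, Fin (r i) → ℕ)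
    (hbal : ∀ i, ∑ j, w i j * d i j = d0) :
    ∃ f : ∀ i j, Fin (w i j) → ((Fin (d i j) → K) →ₗ[K] (Fin d0 → K)),
      IsBalancedRep K w f ∧
      (-(m : ℤ) * (d0 : ℤ) + ∑ i, ∑ j, (w i j : ℤ) * (d i j : ℤ) = 0) ∧
      (∀ (Y0 : Submodule K (Fin d0 → K)) (Y : ∀ i j, Submodule K (Fin (d i j) → K)),
        (∀ i j k, ∀ x ∈ Y i j, f i j k x ∈ Y0) →
        -(m : ℤ) * (finrank K Y0 : ℤ) +
          ∑ i, ∑ j, (w i j : ℤ) * (finrank K (Y i j) : ℤ) ≤ 0) := by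
  have hfr : ∀ i, finrank K (∀ j : Fin (r i), Fin (w i j) → Fin (d i j) → K)
      = finrank K (Fin d0 → K) := by
    intro i
    rw [Module.finrank_pi_fintype, Module.finrank_fintype_fun_eq_card, Fintype.card_fin,
      ← hbal i]
    refine Finset.sum_congr rfl fun j _ => ?_
    rw [Module.finrank_pi_fintype]
    simp [Module.finrank_fintype_fun_eq_card]
  have hΦ : ∀ i, Nonempty ((∀ j : Fin (r i), Fin (w i j) → Fin (d i j) → K) ≃ₗ[K]
      (Fin d0 → K)) := fun i =>
    FiniteDimensional.nonempty_linearEquiv_of_finrank_eq (hfr i)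
  have Φ : ∀ i, ((∀ j : Fin (r i), Fin (w i j) → Fin (d i j) → K) ≃ₗ[K] (Fin d0 → K)) :=
    fun i => (hΦ i).some
  -- key reconstruction identity
  have hrecon : ∀ i (g : ∀ j : Fin (r i), Fin (w i j) → Fin (d i j) → K),
      ∑ j, ∑ k, (Φ i) ((LinearMap.single K (fun j' => Fin (w i j') → Fin (d i j') → K) j)
        ((LinearMap.single K (fun _ : Fin (w i j) => Fin (d i j) → K) k) (g j k)))
      = Φ i g := by
    intro i g
    have inner : ∀ j : Fin (r i),
        ∑ k, (LinearMap.single K (fun _ : Fin (w i j) => Fin (d i j) → K) k) (g j k)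
        = g j := by
      intro j
      simp only [LinearMap.coe_single]
      exact Finset.univ_sum_single (g j)
    calc ∑ j, ∑ k, (Φ i) ((LinearMap.single K (fun j' => Fin (w i j') → Fin (d i j') → K) j)
          ((LinearMap.single K (fun _ : Fin (w i j) => Fin (d i j) → K) k) (g j k)))
        = ∑ j, (Φ i) ((LinearMap.single K (fun j' => Fin (w i j') → Fin (d i j') → K) j)
            (g j)) := by
          refine Finset.sum_congr rfl fun j _ => ?_
          rw [← map_sum, ← map_sum, inner j]
      _ = (Φ i) (∑ j, (LinearMap.single K (fun j' => Fin (w i j') → Fin (d i j') → K) j)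
            (g j)) := by rw [map_sum]
      _ = Φ i g := by
          congr 1
          simp only [LinearMap.coe_single]
          exact Finset.univ_sum_single g
  refine ⟨fun i j k => (Φ i).toLinearMap
      ∘ₗ LinearMap.single K (fun j' => Fin (w i j') → Fin (d i j') → K) j
      ∘ₗ LinearMap.single K (fun _ : Fin (w i j) => Fin (d i j) → K) k, ?_, ?_, ?_⟩
  · -- balanced
    intro i
    have hfun : (fun g : (j : Fin (r i)) → Fin (w i j) → Fin (d i j) → K =>
        ∑ j, ∑ k, ((Φ i).toLinearMap
          ∘ₗ LinearMap.single K (fun j' => Fin (w i j') → Fin (d i j') → K) j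
          ∘ₗ LinearMap.single K (fun _ : Fin (w i j) => Fin (d i j) → K) k) (g j k))
        = fun g => Φ i g := by
      funext g
      simpa using hrecon i g
    rw [hfun]
    exact (Φ i).bijective
  · -- theta of d is zero
    have hz : ∀ i : Fin m, ∑ j, (w i j : ℤ) * (d i j : ℤ) = (d0 : ℤ) := by
      intro i
      have := hbal i
      push_cast [← this]
      rfl
    simp only [hz, Finset.sum_const, Finset.card_univ, Fintype.card_fin, nsmul_eq_mul]
    ring
  · -- semistability
    intro Y0 Y hY
    have key : ∀ i : Fin m, ∑ j, w i j * finrank K (Y i j) ≤ finrank K Y0 := by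
      intro i
      let P : (∀ j : Fin (r i), Fin (w i j) → (Y i j)) →ₗ[K]
          (∀ j : Fin (r i), Fin (w i j) → Fin (d i j) → K) :=
        LinearMap.pi fun j => LinearMap.pi fun k =>
          (Y i j).subtype ∘ₗ (LinearMap.proj k) ∘ₗ (LinearMap.proj j)
      have hPapp : ∀ g, P g = fun j k => ((g j k : Fin (d i j) → K)) := fun g => rfl
      have hPinj : Function.Injective P := by
        intro a b hab
        funext j k
        have h1 : (a j k : Fin (d i j) → K) = b j k := by
          have := congrFun (congrFun hab j) k
          simpa [hPapp] using this
        exact Subtype.ext h1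
      have hmem : ∀ g, ((Φ i).toLinearMap ∘ₗ P) g ∈ Y0 := by
        intro g
        have heq : ((Φ i).toLinearMap ∘ₗ P) g
            = ∑ j, ∑ k, (Φ i) ((LinearMap.single K (fun j' => Fin (w i j') → Fin (d i j') → K) j)
              ((LinearMap.single K (fun _ : Fin (w i j) => Fin (d i j) → K) k)
                ((g j k : Fin (d i j) → K)))) := by
          rw [LinearMap.comp_apply, hPapp]
          exact (hrecon i (fun j k => (g j k : Fin (d i j) → K))).symm
        rw [heq]
        refine Submodule.sum_mem _ fun j _ => Submodule.sum_mem _ fun k _ => ?_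
        exact hY i j k _ (g j k).2
      let T := LinearMap.codRestrict Y0 ((Φ i).toLinearMap ∘ₗ P) hmem
      have hTinj : Function.Injective T := by
        intro a b hab
        apply (Φ i).injective.comp hPinj
        exact congrArg Subtype.val hab
      have hle := LinearMap.finrank_le_finrank_of_injective hTinj
      have hdom : finrank K (∀ j : Fin (r i), Fin (w i j) → (Y i j))
          = ∑ j, w i j * finrank K (Y i j) := by
        rw [Module.finrank_pi_fintype]
        refine Finset.sum_congr rfl fun j _ => ?_
        rw [Module.finrank_pi_fintype]
        simp [Finset.sum_const, mul_comm]
      rwa [hdom] at hle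
    have hsum : ∑ i, ∑ j, (w i j : ℤ) * (finrank K (Y i j) : ℤ)
        ≤ ∑ _i : Fin m, (finrank K Y0 : ℤ) := by
      refine Finset.sum_le_sum fun i _ => ?_
      have := key i
      exact_mod_cast (by exact_mod_cast this : (∑ j, (w i j : ℤ) * (finrank K (Y i j) : ℤ)) ≤ (finrank K Y0 : ℤ))
    simp only [Finset.sum_const, Finset.card_univ, Fintype.card_fin, nsmul_eq_mul] at hsum
    linarith
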